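/- Let T ≥ 1 and 1 ≤ K ≤ T be integers, let a : {1,...,T} → ℝ, and let t_1 < t_2 < ... < t_K be indices in {1,...,T} such that a(t) ≥ 0 for every t ∉ {t_1,...,t_K} and a(t_k) ≤ 0 for every k. Then the following are equivalent: (i) there exist functions w_1,...,w_K : {1,...,T} → ℝ such that for every k and τ: w_k(τ) ≥ 0; w_k(τ) = 0 whenever τ ≤ t_k or τ ∈ {t_1,...,t_K}; Σ_{τ=1}^{T} w_k(τ) = −a(t_k); and Σ_{k=1}^{K} w_k(τ) ≤ a(τ) for every τ ∉ {t_1,...,t_K}; (ii) for every k = 1,...,K, Σ_{τ=t_k}^{T} a(τ) ≥ 0. -/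

import Mathlib

private lemma min_sub_min_nonneg {x c d : ℝ} (hc : 0 ≤ c) :
    0 ≤ min (x + c) d - min x d := by
  have : min x d ≤ min (x + c) d := min_le_min (by linarith) le_rfl
  linarith

private lemma min_sub_min_le {x c d : ℝ} (hc : 0 ≤ c) :
    min (x + c) d - min x d ≤ c := by
  rcases le_total x d with h | h
  · have h1 : min (x + c) d ≤ x + c := min_le_left _ _
    rw [min_eq_left h]; linarith
  · rw [min_eq_right h, min_eq_right (by linarith)]; linarith

/-- The hard direction: nonnegative suffix sums imply a feasible re-serving
allocation.  Proved by induction on the number of interventions, serving the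
last intervention's deficit greedily (water-filling from the left on the
interval after the last intervention time). -/
private lemma stmt_11_aux (T : ℕ) : ∀ (K : ℕ) (a : Fin T → ℝ) (t : Fin K → Fin T),
    StrictMono t →
    (∀ τ : Fin T, (∀ k, t k ≠ τ) → 0 ≤ a τ) →
    (∀ k, a (t k) ≤ 0) →
    (∀ k : Fin K, 0 ≤ ∑ τ ∈ Finset.Ici (t k), a τ) →
    ∃ w : Fin K → Fin T → ℝ,
      (∀ k τ, 0 ≤ w k τ) ∧
      (∀ k τ, τ ≤ t k → w k τ = 0) ∧
      (∀ k τ, (∃ k', t k' = τ) → w k τ = 0) ∧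
      (∀ k, ∑ τ, w k τ = -a (t k)) ∧
      (∀ τ : Fin T, (∀ k, t k ≠ τ) → ∑ k, w k τ ≤ a τ) := by
  intro K
  induction K with
  | zero =>
      intro a t hmono hpos hneg hsuf
      refine ⟨fun k => k.elim0, fun k => k.elim0, fun k => k.elim0,
        fun k => k.elim0, fun k => k.elim0, ?_⟩
      intro τ hτ
      simpa using hpos τ (fun k => k.elim0)
  | succ K ih =>
      intro a t hmono hpos hneg hsuf
      classical
      set L : Fin T := t (Fin.last K) with hL
      set d : ℝ := -a L with hdd
      have hd : 0 ≤ d := by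
        have := hneg (Fin.last K); simp only [hdd]; linarith
      have hle : ∀ k : Fin (K + 1), t k ≤ L := fun k => hmono.monotone (Fin.le_last k)
      -- all times strictly after L are non-intervention times
      have hni : ∀ σ : Fin T, L < σ → (∀ k, t k ≠ σ) := by
        intro σ hσ k hk
        exact absurd hσ (not_lt.mpr (hk ▸ hle k))
      have hnia : ∀ σ : Fin T, L < σ → 0 ≤ a σ := fun σ hσ => hpos σ (hni σ hσ)
      -- the greedy water-filling allocation for the last intervention
      set S : ℕ → Finset (Fin T) :=
        fun n => Finset.univ.filter (fun σ : Fin T => L < σ ∧ (σ : ℕ) < n) with hSdef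
      set F : ℕ → ℝ := fun n => min (∑ σ ∈ S n, a σ) d with hFdef
      set wl : Fin T → ℝ := fun τ => F ((τ : ℕ) + 1) - F (τ : ℕ) with hwldef
      have hS0 : S 0 = ∅ := by
        ext σ; simp [hSdef]
      have hSstep : ∀ τ : Fin T,
          S ((τ : ℕ) + 1) = if L < τ then insert τ (S (τ : ℕ)) else S (τ : ℕ) := by
        intro τ
        ext σ
        by_cases h : L < τ
        · simp only [if_pos h, hSdef, Finset.mem_filter, Finset.mem_univ, true_and,
            Finset.mem_insert]
          constructor
          · rintro ⟨h1, h2⟩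
            rcases Nat.lt_succ_iff_lt_or_eq.mp h2 with h3 | h3
            · exact Or.inr ⟨h1, h3⟩
            · exact Or.inl (Fin.ext h3)
          · rintro (rfl | ⟨h1, h2⟩)
            · exact ⟨h, Nat.lt_succ_self _⟩
            · exact ⟨h1, Nat.lt_succ_of_lt h2⟩
        · simp only [if_neg h, hSdef, Finset.mem_filter, Finset.mem_univ, true_and]
          constructor
          · rintro ⟨h1, h2⟩
            refine ⟨h1, ?_⟩
            rcases Nat.lt_succ_iff_lt_or_eq.mp h2 with h3 | h3
            · exact h3
            · exact absurd (Fin.ext h3 ▸ h1) h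
          · rintro ⟨h1, h2⟩
            exact ⟨h1, Nat.lt_succ_of_lt h2⟩
      have hτS : ∀ τ : Fin T, τ ∉ S (τ : ℕ) := by
        intro τ h
        simp [hSdef] at h
      have hwl_step_pos : ∀ τ : Fin T, L < τ →
          wl τ = min (∑ σ ∈ S (τ : ℕ), a σ + a τ) d - min (∑ σ ∈ S (τ : ℕ), a σ) d := by
        intro τ hτ
        simp only [hwldef, hFdef, hSstep τ, if_pos hτ, Finset.sum_insert (hτS τ)]
        ring_nf
      have hwl_zero : ∀ τ : Fin T, τ ≤ L → wl τ = 0 := by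
        intro τ hτ
        simp only [hwldef, hFdef, hSstep τ, if_neg (not_lt.mpr hτ), sub_self]
      have hwl_nonneg : ∀ τ : Fin T, 0 ≤ wl τ := by
        intro τ
        by_cases hτ : L < τ
        · rw [hwl_step_pos τ hτ]
          exact min_sub_min_nonneg (hnia τ hτ)
        · rw [hwl_zero τ (not_lt.mp hτ)]
      have hwl_le : ∀ τ : Fin T, L < τ → wl τ ≤ a τ := by
        intro τ hτ
        rw [hwl_step_pos τ hτ]
        exact min_sub_min_le (hnia τ hτ)
      -- total amount re-served for the last intervention is exactly the deficit d
      have hST : S T = Finset.Ioi L := by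
        ext σ; simp [hSdef, σ.isLt, Finset.mem_Ioi]
      have hIci_sum : ∑ τ ∈ Finset.Ici L, a τ = a L + ∑ τ ∈ Finset.Ioi L, a τ := by
        rw [Finset.Ici_eq_cons_Ioi, Finset.sum_cons]
      have hcap : d ≤ ∑ σ ∈ Finset.Ioi L, a σ := by
        have := hsuf (Fin.last K)
        rw [← hL, hIci_sum] at this
        simp only [hdd]; linarith
      have hwl_sum : ∑ τ, wl τ = d := by
        have h1 : ∑ τ : Fin T, wl τ = ∑ i ∈ Finset.range T, (F (i + 1) - F i) :=
          Fin.sum_univ_eq_sum_range (fun i => F (i + 1) - F i) T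
        rw [h1, Finset.sum_range_sub]
        have hF0 : F 0 = 0 := by simp [hFdef, hS0, min_eq_left hd]
        have hFT : F T = d := by
          simp only [hFdef, hST]
          exact min_eq_right hcap
        rw [hF0, hFT, sub_zero]
      -- the reduced surplus profile and remaining interventions
      set a' : Fin T → ℝ := fun τ => if τ = L then 0 else a τ - wl τ with ha'def
      set t' : Fin K → Fin T := fun j => t j.castSucc with ht'def
      have ht'mono : StrictMono t' := fun i j h =>
        hmono (Fin.castSucc_lt_castSucc_iff.mpr h)
      have htlt : ∀ j : Fin K, t' j < L := fun j => hmono (Fin.castSucc_lt_last j)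
      have ha'tj : ∀ j : Fin K, a' (t' j) = a (t' j) := by
        intro j
        rw [ha'def]
        simp only [if_neg (htlt j).ne, hwl_zero _ (htlt j).le, sub_zero]
      have hpos' : ∀ τ : Fin T, (∀ j, t' j ≠ τ) → 0 ≤ a' τ := by
        intro τ hτ
        by_cases hτL : τ = L
        · simp [ha'def, hτL]
        · rw [ha'def]; simp only [if_neg hτL]
          by_cases hLτ : L < τ
          · linarith [hwl_le τ hLτ]
          · rw [hwl_zero τ (not_lt.mp hLτ), sub_zero]
            refine hpos τ ?_
            intro k
            refine Fin.lastCases ?_ ?_ k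
            · rw [← hL]; exact fun h => hτL h.symm
            · exact hτ
      have hneg' : ∀ j, a' (t' j) ≤ 0 := fun j => (ha'tj j) ▸ hneg j.castSucc
      have hsuf' : ∀ j : Fin K, 0 ≤ ∑ τ ∈ Finset.Ici (t' j), a' τ := by
        intro j
        have hkey : ∀ τ : Fin T, a' τ = (a τ - wl τ) + (if τ = L then d else 0) := by
          intro τ
          by_cases hτL : τ = L
          · rw [hτL]
            have hz1 : a' L = 0 := by simp [ha'def]
            have hz2 : wl L = 0 := hwl_zero L le_rfl
            rw [hz1, hz2, if_pos rfl, hdd]; ring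
          · rw [ha'def]; simp [hτL]
        have hLmem : L ∈ Finset.Ici (t' j) := Finset.mem_Ici.mpr (htlt j).le
        have hwl_out : ∑ τ ∈ Finset.Ici (t' j), wl τ = ∑ τ, wl τ := by
          refine Finset.sum_subset (Finset.subset_univ _) ?_
          intro τ _ hτ
          rw [Finset.mem_Ici] at hτ
          exact hwl_zero τ (le_of_lt (lt_of_lt_of_le (lt_of_not_ge hτ) (htlt j).le))
        calc (0:ℝ) ≤ ∑ τ ∈ Finset.Ici (t' j), a τ := hsuf j.castSucc
          _ = ∑ τ ∈ Finset.Ici (t' j), a' τ := by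
              simp only [hkey, Finset.sum_add_distrib, Finset.sum_sub_distrib,
                Finset.sum_ite_eq' (Finset.Ici (t' j)) L (fun _ => d), if_pos hLmem,
                hwl_out, hwl_sum]
              ring
      obtain ⟨w', h1', h2', h3', h4', h5'⟩ := ih a' t' ht'mono hpos' hneg' hsuf'
      -- each recursive allocation vanishes at L (no remaining surplus there)
      have hw'L : ∀ j, w' j L = 0 := by
        intro j
        have hsum : ∑ j', w' j' L ≤ a' L := h5' L (fun j' => (htlt j').ne)
        have hzero : a' L = 0 := by simp [ha'def]
        have h0 : ∑ j', w' j' L = 0 :=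
          le_antisymm (hzero ▸ hsum)
            (Finset.sum_nonneg (fun j' _ => h1' j' L))
        exact (Finset.sum_eq_zero_iff_of_nonneg (fun j' _ => h1' j' L)).mp h0 j
          (Finset.mem_univ j)
      -- assemble the full allocation
      obtain ⟨W, hWl, hWc⟩ :
          ∃ W : Fin (K + 1) → Fin T → ℝ,
            (∀ τ, W (Fin.last K) τ = wl τ) ∧ (∀ j τ, W j.castSucc τ = w' j τ) :=
        ⟨Fin.lastCases wl w',
          fun τ => congrFun (Fin.lastCases_last (motive := fun _ => Fin T → ℝ)) τ,
          fun j τ => congrFun (Fin.lastCases_castSucc (motive := fun _ => Fin T → ℝ) j) τ⟩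
      refine ⟨W, ?_, ?_, ?_, ?_, ?_⟩
      · intro k τ
        refine Fin.lastCases ?_ ?_ k
        · rw [hWl]; exact hwl_nonneg τ
        · intro j; rw [hWc]; exact h1' j τ
      · intro k
        refine Fin.lastCases ?_ ?_ k
        · intro τ hτ; rw [hWl]; exact hwl_zero τ hτ
        · intro j τ hτ; rw [hWc]; exact h2' j τ hτ
      · intro k
        refine Fin.lastCases ?_ ?_ k
        · rintro τ ⟨k', rfl⟩
          rw [hWl]
          exact hwl_zero _ (hle k')
        · rintro j τ ⟨k', rfl⟩
          rw [hWc]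
          refine Fin.lastCases ?_ ?_ k'
          · rw [← hL]; exact hw'L j
          · intro j'; exact h3' j (t' j') ⟨j', rfl⟩
      · intro k
        refine Fin.lastCases ?_ ?_ k
        · simp only [hWl]
          rw [hwl_sum, ← hL, hdd]
        · intro j
          simp only [hWc]
          rw [h4' j, ha'tj j]
      · intro τ hτ
        have hτL : τ ≠ L := fun h => hτ (Fin.last K) (hL ▸ h.symm)
        have hτ' : ∀ j : Fin K, t' j ≠ τ := fun j => hτ j.castSucc
        have hsum : ∑ k : Fin (K + 1), W k τ = ∑ j : Fin K, w' j τ + wl τ := by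
          rw [Fin.sum_univ_castSucc, hWl]
          simp only [hWc]
        rw [hsum]
        have h5 := h5' τ hτ'
        have ha'τ : a' τ = a τ - wl τ := by rw [ha'def]; simp [hτL]
        rw [ha'τ] at h5
        linarith

/-- Theorem 3, second part: feasibility of re-serving the
curtailed load iff all suffix sums of surpluses are nonnegative.
Let `a : Fin T → ℝ` (the surplus `Cres t - C*_K * lhat t`), and let
`t 0 < t 1 < … < t (K-1)` be the intervention times, with `a τ ≥ 0` off the
intervention times and `a (t k) ≤ 0` at them. Then the following are
equivalent:
(i) there exist `w k : Fin T → ℝ` (the re-served portions) with `w k τ ≥ 0`,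
`w k τ = 0` for `τ ≤ t k` and at intervention times, `∑ τ, w k τ = -a (t k)`,
and `∑ k, w k τ ≤ a τ` off the intervention times;
(ii) `∑_{τ ≥ t k} a τ ≥ 0` for every `k`. -/
theorem stmt_11 (T : ℕ) (hT : 1 ≤ T) (K : ℕ) (hK1 : 1 ≤ K) (hKT : K ≤ T)
    (a : Fin T → ℝ)
    (t : Fin K → Fin T) (hmono : StrictMono t)
    (hpos : ∀ τ : Fin T, (∀ k, t k ≠ τ) → 0 ≤ a τ)
    (hneg : ∀ k : Fin K, a (t k) ≤ 0) :
    (∃ w : Fin K → Fin T → ℝ,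
      (∀ k τ, 0 ≤ w k τ) ∧
      (∀ k τ, τ ≤ t k → w k τ = 0) ∧
      (∀ k τ, (∃ k', t k' = τ) → w k τ = 0) ∧
      (∀ k, ∑ τ, w k τ = -a (t k)) ∧
      (∀ τ : Fin T, (∀ k, t k ≠ τ) → ∑ k, w k τ ≤ a τ))
    ↔ (∀ k : Fin K, 0 ≤ ∑ τ ∈ Finset.Ici (t k), a τ) := by
  classical
  constructor
  · rintro ⟨w, hw0, hwle, hwint, hwsum, hwcap⟩ k
    set I : Finset (Fin T) := Finset.Ici (t k) with hI
    set P : Fin T → Prop := fun τ => ∃ j, t j = τ with hP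
    -- the intervention times inside the suffix are exactly `t j` for `j ≥ k`
    have himg : I.filter P = (Finset.Ici k).image t := by
      ext τ
      simp only [hI, hP, Finset.mem_filter, Finset.mem_image, Finset.mem_Ici]
      constructor
      · rintro ⟨h1, j, rfl⟩
        exact ⟨j, hmono.le_iff_le.mp h1, rfl⟩
      · rintro ⟨j, hj, rfl⟩
        exact ⟨hmono.le_iff_le.mpr hj, j, rfl⟩
    have hint_sum : ∑ τ ∈ I.filter P, a τ = ∑ j ∈ Finset.Ici k, a (t j) := by
      rw [himg]
      exact Finset.sum_image (fun i _ j _ h => hmono.injective h)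
    -- the re-served amounts for interventions `j ≥ k` fit in the suffix surplus
    have hfit : ∀ j ∈ Finset.Ici k,
        ∑ τ ∈ I.filter (fun τ => ¬ P τ), w j τ = -a (t j) := by
      intro j hj
      rw [Finset.mem_Ici] at hj
      rw [← hwsum j]
      refine Finset.sum_subset (Finset.subset_univ _) ?_
      intro τ _ hτ
      simp only [Finset.mem_filter, not_and, not_not] at hτ
      by_cases hτI : τ ∈ I
      · exact hwint j τ (hτ hτI)
      · rw [hI, Finset.mem_Ici] at hτI
        exact hwle j τ (le_of_lt (lt_of_lt_of_le (lt_of_not_ge hτI) (hmono.le_iff_le.mpr hj)))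
    have hbound : ∑ j ∈ Finset.Ici k, (-a (t j)) ≤ ∑ τ ∈ I.filter (fun τ => ¬ P τ), a τ := by
      calc ∑ j ∈ Finset.Ici k, (-a (t j))
          = ∑ j ∈ Finset.Ici k, ∑ τ ∈ I.filter (fun τ => ¬ P τ), w j τ := by
            exact Finset.sum_congr rfl (fun j hj => (hfit j hj).symm)
        _ = ∑ τ ∈ I.filter (fun τ => ¬ P τ), ∑ j ∈ Finset.Ici k, w j τ := Finset.sum_comm
        _ ≤ ∑ τ ∈ I.filter (fun τ => ¬ P τ), a τ := by
            refine Finset.sum_le_sum ?_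
            intro τ hτ
            simp only [Finset.mem_filter, hP] at hτ
            have hτni : ∀ j, t j ≠ τ := fun j h => hτ.2 ⟨j, h⟩
            calc ∑ j ∈ Finset.Ici k, w j τ
                ≤ ∑ j, w j τ :=
                  Finset.sum_le_sum_of_subset_of_nonneg (Finset.subset_univ _)
                    (fun j _ _ => hw0 j τ)
              _ ≤ a τ := hwcap τ hτni
    have hsplit : ∑ τ ∈ I.filter P, a τ + ∑ τ ∈ I.filter (fun τ => ¬ P τ), a τ
        = ∑ τ ∈ I, a τ := Finset.sum_filter_add_sum_filter_not I P a
    have : ∑ j ∈ Finset.Ici k, (-a (t j)) = -∑ j ∈ Finset.Ici k, a (t j) :=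
      Finset.sum_neg_distrib _
    rw [this] at hbound
    rw [← hsplit, hint_sum]
    linarith
  · intro hsuf
    exact stmt_11_aux T K a t hmono hpos hneg hsuf
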